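/- Let q : ℝ × ℝ → ℂ be smooth and satisfy the focusing NLS equation i·∂t q + ∂x² q + 2 q² conj(q) = 0. Let λ₁ = α + iβ with α, β ∈ ℝ, and let (φ₁, φ₂) be a smooth solution of the AKNS Lax system at λ₁ for potential q such that |φ₁(x,t)|² + |φ₂(x,t)|² > 0 for all (x,t). Then the function q¹ := q + 4β·φ₁·conj(φ₂) / (|φ₁|² + |φ₂|²) (equivalently, q¹ = q + 2i(λ₁ − conj(λ₁))·φ₁·(−conj(φ₂)) / (φ₁·conj(φ₁) + φ₂·conj(φ₂))) also satisfies the focusing NLS equation i·∂t q¹ + ∂x² q¹ + 2 (q¹)² conj(q¹) = 0 on ℝ². -/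

import Mathlib

open Complex

/-- Partial derivative in `x` of a function of `(x,t)`. -/
noncomputable def pX (f : ℝ → ℝ → ℂ) : ℝ → ℝ → ℂ := fun x t => deriv (fun x' => f x' t) x

/-- Partial derivative in `t` of a function of `(x,t)`. -/
noncomputable def pT (f : ℝ → ℝ → ℂ) : ℝ → ℝ → ℂ := fun x t => deriv (fun t' => f x t') t

/-- The focusing NLS equation `i ψ_t + ψ_xx + 2 ψ² ψ* = 0` for a function `ψ` of `(x,t)`. -/
def FocusingNLS (ψ : ℝ → ℝ → ℂ) : Prop :=
  ∀ x t : ℝ, I * pT ψ x t + pX (pX ψ) x t + 2 * (ψ x t) ^ 2 * (starRingEnd ℂ) (ψ x t) = 0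

/-- The AKNS Lax system at spectral parameter `lam` for potential `q`, for the pair
`(φ₁, φ₂)` of functions of `(x,t)`. -/
def AKNSLaxSolution (q : ℝ → ℝ → ℂ) (lam : ℂ) (φ1 φ2 : ℝ → ℝ → ℂ) : Prop :=
  ∀ x t : ℝ,
    pX φ1 x t = -I * lam * φ1 x t + q x t * φ2 x t ∧
    pX φ2 x t = I * lam * φ2 x t - (starRingEnd ℂ) (q x t) * φ1 x t ∧
    pT φ1 x t = (-2 * I * lam ^ 2 + I * q x t * (starRingEnd ℂ) (q x t)) * φ1 x t
      + (2 * q x t * lam + I * pX q x t) * φ2 x t ∧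
    pT φ2 x t = (-2 * (starRingEnd ℂ) (q x t) * lam
        + I * pX (fun x' t' => (starRingEnd ℂ) (q x' t')) x t) * φ1 x t
      + (2 * I * lam ^ 2 - I * q x t * (starRingEnd ℂ) (q x t)) * φ2 x t

lemma hasDerivAt_pX (f : ℝ → ℝ → ℂ)
    (hf : ContDiff ℝ (⊤ : ℕ∞) (fun p : ℝ × ℝ => f p.1 p.2)) (x t : ℝ) :
    HasDerivAt (fun x' => f x' t) (pX f x t) x := by
  have h : DifferentiableAt ℝ (fun x' : ℝ => f x' t) x := by
    have h1 : DifferentiableAt ℝ (fun p : ℝ × ℝ => f p.1 p.2) (x, t) :=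
      (hf.differentiable (by simp)).differentiableAt
    exact h1.comp x ((differentiableAt_id (𝕜 := ℝ) (x := x)).prodMk (differentiableAt_const t))
  simpa only [pX] using h.hasDerivAt

lemma hasDerivAt_pT (f : ℝ → ℝ → ℂ)
    (hf : ContDiff ℝ (⊤ : ℕ∞) (fun p : ℝ × ℝ => f p.1 p.2)) (x t : ℝ) :
    HasDerivAt (fun t' => f x t') (pT f x t) t := by
  have h : DifferentiableAt ℝ (fun t' : ℝ => f x t') t := by
    have h1 : DifferentiableAt ℝ (fun p : ℝ × ℝ => f p.1 p.2) (x, t) :=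
      (hf.differentiable (by simp)).differentiableAt
    exact h1.comp t ((differentiableAt_const x).prodMk differentiableAt_id)
  simpa only [pT] using h.hasDerivAt

lemma pX_smooth (f : ℝ → ℝ → ℂ)
    (hf : ContDiff ℝ (⊤ : ℕ∞) (fun p : ℝ × ℝ => f p.1 p.2)) :
    ContDiff ℝ (⊤ : ℕ∞) (fun p : ℝ × ℝ => pX f p.1 p.2) := by
  have key : (fun p : ℝ × ℝ => pX f p.1 p.2)
      = fun p : ℝ × ℝ => fderiv ℝ (fun p : ℝ × ℝ => f p.1 p.2) p (1, 0) := by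
    funext p
    have h1 : HasFDerivAt (fun p : ℝ × ℝ => f p.1 p.2)
        (fderiv ℝ (fun p : ℝ × ℝ => f p.1 p.2) p) p :=
      ((hf.differentiable (by simp)) p).hasFDerivAt
    have h2 : HasFDerivAt (fun x' : ℝ => ((x', p.2) : ℝ × ℝ))
        ((ContinuousLinearMap.id ℝ ℝ).prod (0 : ℝ →L[ℝ] ℝ)) p.1 :=
      (hasFDerivAt_id p.1).prodMk (hasFDerivAt_const p.2 p.1)
    have h3 := (h1.comp p.1 (by simpa using h2)).hasDerivAt
    have h4 : pX f p.1 p.2 = _ := h3.deriv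
    rw [pX] at h4 ⊢
    simp only [h4, ContinuousLinearMap.coe_comp', Function.comp_apply,
      ContinuousLinearMap.prod_apply, ContinuousLinearMap.coe_id', id_eq,
      ContinuousLinearMap.zero_apply]
  rw [key]
  exact (hf.fderiv_right (by norm_cast)).clm_apply contDiff_const

lemma pxconj (f : ℝ → ℝ → ℂ) (x t : ℝ) :
    pX (fun x' t' => (starRingEnd ℂ) (f x' t')) x t = (starRingEnd ℂ) (pX f x t) :=
  deriv.star


set_option maxHeartbeats 16000000 in
/-- one-fold Darboux transformation of the focusing NLS equation: if `q` solves
NLS and `(φ₁, φ₂)` is a nowhere-vanishing smooth solution of the AKNS Lax system at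
`λ₁ = α + iβ`, then `q¹ = q + 4β φ₁ conj(φ₂)/(|φ₁|² + |φ₂|²)` also solves NLS. -/
theorem statement6 (q : ℝ → ℝ → ℂ)
    (hq : ContDiff ℝ (⊤ : ℕ∞) (fun p : ℝ × ℝ => q p.1 p.2))
    (hNLS : FocusingNLS q)
    (α β : ℝ) (lam1 : ℂ) (hlam1 : lam1 = (α : ℂ) + I * β)
    (φ1 φ2 : ℝ → ℝ → ℂ)
    (hφ1 : ContDiff ℝ (⊤ : ℕ∞) (fun p : ℝ × ℝ => φ1 p.1 p.2))
    (hφ2 : ContDiff ℝ (⊤ : ℕ∞) (fun p : ℝ × ℝ => φ2 p.1 p.2))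
    (hLax : AKNSLaxSolution q lam1 φ1 φ2)
    (hpos : ∀ x t : ℝ, 0 < Complex.normSq (φ1 x t) + Complex.normSq (φ2 x t))
    (q1 : ℝ → ℝ → ℂ)
    (hq1 : ∀ x t : ℝ, q1 x t = q x t
      + 4 * (β : ℂ) * φ1 x t * (starRingEnd ℂ) (φ2 x t)
        / ((Complex.normSq (φ1 x t) : ℂ) + (Complex.normSq (φ2 x t) : ℂ))) :
    FocusingNLS q1 := by
  have hDne : ∀ x t : ℝ, φ1 x t * (starRingEnd ℂ) (φ1 x t)
      + φ2 x t * (starRingEnd ℂ) (φ2 x t) ≠ 0 := by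
    intro x t
    rw [Complex.mul_conj, Complex.mul_conj, ← Complex.ofReal_add]
    exact Complex.ofReal_ne_zero.mpr (ne_of_gt (hpos x t))
  have hq1fun : ∀ x t : ℝ, q1 x t = q x t + 4 * (β : ℂ) * φ1 x t * (starRingEnd ℂ) (φ2 x t)
      / (φ1 x t * (starRingEnd ℂ) (φ1 x t) + φ2 x t * (starRingEnd ℂ) (φ2 x t)) := by
    intro x t
    rw [hq1 x t, ← Complex.mul_conj, ← Complex.mul_conj]
  have hQXX := pX_smooth q hq
  have keyX : ∀ x t : ℝ, pX q1 x t =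
      pX q x t + 4 * (β : ℂ) *
        ((-(I * (lam1 + (starRingEnd ℂ) lam1)) * (φ1 x t * (starRingEnd ℂ) (φ2 x t))
            - q x t * (φ1 x t * (starRingEnd ℂ) (φ1 x t) - φ2 x t * (starRingEnd ℂ) (φ2 x t)))
          * (φ1 x t * (starRingEnd ℂ) (φ1 x t) + φ2 x t * (starRingEnd ℂ) (φ2 x t))
        - I * ((starRingEnd ℂ) lam1 - lam1) *
          ((φ1 x t * (starRingEnd ℂ) (φ2 x t)) *
            (φ1 x t * (starRingEnd ℂ) (φ1 x t) - φ2 x t * (starRingEnd ℂ) (φ2 x t))))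
        / ((φ1 x t * (starRingEnd ℂ) (φ1 x t) + φ2 x t * (starRingEnd ℂ) (φ2 x t)) * (φ1 x t * (starRingEnd ℂ) (φ1 x t) + φ2 x t * (starRingEnd ℂ) (φ2 x t))) := by
    intro x t
    have ha := hasDerivAt_pX φ1 hφ1 x t
    rw [(hLax x t).1] at ha
    have hb := hasDerivAt_pX φ2 hφ2 x t
    rw [(hLax x t).2.1] at hb
    have hca : HasDerivAt (fun x' => (starRingEnd ℂ) (φ1 x' t))
        ((starRingEnd ℂ) (-I * lam1 * φ1 x t + q x t * φ2 x t)) x := ha.star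
    have hcb : HasDerivAt (fun x' => (starRingEnd ℂ) (φ2 x' t))
        ((starRingEnd ℂ) (I * lam1 * φ2 x t - (starRingEnd ℂ) (q x t) * φ1 x t)) x := hb.star
    have hqx := hasDerivAt_pX q hq x t
    have hbig : HasDerivAt (fun x' => q x' t + 4 * (β : ℂ) * φ1 x' t * (starRingEnd ℂ) (φ2 x' t)
        / (φ1 x' t * (starRingEnd ℂ) (φ1 x' t) + φ2 x' t * (starRingEnd ℂ) (φ2 x' t))) _ x :=
      hqx.add (((ha.const_mul (4 * (β : ℂ))).mul hcb).div
        ((ha.mul hca).add (hb.mul hcb)) (hDne x t))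
    have hfun : (fun x' => q1 x' t) = _ := funext fun x' => hq1fun x' t
    rw [show pX q1 x t = deriv (fun x' => q1 x' t) x from rfl, hfun, hbig.deriv]
    simp only [map_add, map_sub, map_mul, map_neg, Complex.conj_conj, Complex.conj_I,
      Pi.mul_apply, Pi.add_apply, Pi.sub_apply]
    field_simp
    ring
  intro x t
  -- t-derivative of q1
  have hat := hasDerivAt_pT φ1 hφ1 x t
  rw [(hLax x t).2.2.1] at hat
  have hbt := hasDerivAt_pT φ2 hφ2 x t
  rw [(hLax x t).2.2.2, pxconj q x t] at hbt
  have hcat : HasDerivAt (fun t' => (starRingEnd ℂ) (φ1 x t'))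
      ((starRingEnd ℂ) ((-2 * I * lam1 ^ 2 + I * q x t * (starRingEnd ℂ) (q x t)) * φ1 x t
        + (2 * q x t * lam1 + I * pX q x t) * φ2 x t)) t := hat.star
  have hcbt : HasDerivAt (fun t' => (starRingEnd ℂ) (φ2 x t'))
      ((starRingEnd ℂ) ((-2 * (starRingEnd ℂ) (q x t) * lam1
          + I * (starRingEnd ℂ) (pX q x t)) * φ1 x t
        + (2 * I * lam1 ^ 2 - I * q x t * (starRingEnd ℂ) (q x t)) * φ2 x t)) t := hbt.star
  have hqt := hasDerivAt_pT q hq x t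
  have hbigT : HasDerivAt (fun t' => q x t' + 4 * (β : ℂ) * φ1 x t' * (starRingEnd ℂ) (φ2 x t')
      / (φ1 x t' * (starRingEnd ℂ) (φ1 x t') + φ2 x t' * (starRingEnd ℂ) (φ2 x t'))) _ t :=
    hqt.add (((hat.const_mul (4 * (β : ℂ))).mul hcbt).div
      ((hat.mul hcat).add (hbt.mul hcbt)) (hDne x t))
  have hfunT : (fun t' => q1 x t') = _ := funext fun t' => hq1fun x t'
  -- second x-derivative of q1
  have ha := hasDerivAt_pX φ1 hφ1 x t
  rw [(hLax x t).1] at ha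
  have hb := hasDerivAt_pX φ2 hφ2 x t
  rw [(hLax x t).2.1] at hb
  have hca : HasDerivAt (fun x' => (starRingEnd ℂ) (φ1 x' t))
      ((starRingEnd ℂ) (-I * lam1 * φ1 x t + q x t * φ2 x t)) x := ha.star
  have hcb : HasDerivAt (fun x' => (starRingEnd ℂ) (φ2 x' t))
      ((starRingEnd ℂ) (I * lam1 * φ2 x t - (starRingEnd ℂ) (q x t) * φ1 x t)) x := hb.star
  have hqx := hasDerivAt_pX q hq x t
  have hpxx := hasDerivAt_pX (pX q) hQXX x t
  have hN := ha.mul hcb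
  have hS := (ha.mul hca).sub (hb.mul hcb)
  have hDD := (ha.mul hca).add (hb.mul hcb)
  have hbigXX : HasDerivAt (fun x' =>
      pX q x' t + 4 * (β : ℂ) *
        ((-(I * (lam1 + (starRingEnd ℂ) lam1)) * (φ1 x' t * (starRingEnd ℂ) (φ2 x' t))
            - q x' t * (φ1 x' t * (starRingEnd ℂ) (φ1 x' t) - φ2 x' t * (starRingEnd ℂ) (φ2 x' t)))
          * (φ1 x' t * (starRingEnd ℂ) (φ1 x' t) + φ2 x' t * (starRingEnd ℂ) (φ2 x' t))
        - I * ((starRingEnd ℂ) lam1 - lam1) *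
          ((φ1 x' t * (starRingEnd ℂ) (φ2 x' t)) *
            (φ1 x' t * (starRingEnd ℂ) (φ1 x' t) - φ2 x' t * (starRingEnd ℂ) (φ2 x' t))))
        / ((φ1 x' t * (starRingEnd ℂ) (φ1 x' t) + φ2 x' t * (starRingEnd ℂ) (φ2 x' t)) * (φ1 x' t * (starRingEnd ℂ) (φ1 x' t) + φ2 x' t * (starRingEnd ℂ) (φ2 x' t)))) _ x :=
    hpxx.add ((((((hN.const_mul (-(I * (lam1 + (starRingEnd ℂ) lam1)))).sub
      (hqx.mul hS)).mul hDD).sub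
        ((hN.mul hS).const_mul (I * ((starRingEnd ℂ) lam1 - lam1)))).const_mul
          (4 * (β : ℂ))).div (hDD.mul hDD) (mul_ne_zero (hDne x t) (hDne x t)))
  have hfunX : (fun x' => pX q1 x' t) = _ := funext fun x' => keyX x' t
  have hQt : pT q x t = I * pX (pX q) x t + 2 * I * q x t ^ 2 * (starRingEnd ℂ) (q x t) := by
    linear_combination (-I) * hNLS x t + pT q x t * Complex.I_sq
  have hI2 : (I : ℂ) ^ 2 = -1 := Complex.I_sq
  have hI3 : (I : ℂ) ^ 3 = -I := by
    rw [show (I : ℂ) ^ 3 = (I ^ 2) ^ 1 * I ^ 1 by ring, hI2]; norm_num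
  have hI4 : (I : ℂ) ^ 4 = 1 := by
    rw [show (I : ℂ) ^ 4 = (I ^ 2) ^ 2 * I ^ 0 by ring, hI2]; norm_num
  have hI5 : (I : ℂ) ^ 5 = I := by
    rw [show (I : ℂ) ^ 5 = (I ^ 2) ^ 2 * I ^ 1 by ring, hI2]; norm_num
  have hI6 : (I : ℂ) ^ 6 = -1 := by
    rw [show (I : ℂ) ^ 6 = (I ^ 2) ^ 3 * I ^ 0 by ring, hI2]; norm_num
  have hI7 : (I : ℂ) ^ 7 = -I := by
    rw [show (I : ℂ) ^ 7 = (I ^ 2) ^ 3 * I ^ 1 by ring, hI2]; norm_num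
  have hI8 : (I : ℂ) ^ 8 = 1 := by
    rw [show (I : ℂ) ^ 8 = (I ^ 2) ^ 4 * I ^ 0 by ring, hI2]; norm_num
  have hI9 : (I : ℂ) ^ 9 = I := by
    rw [show (I : ℂ) ^ 9 = (I ^ 2) ^ 4 * I ^ 1 by ring, hI2]; norm_num
  have hI10 : (I : ℂ) ^ 10 = -1 := by
    rw [show (I : ℂ) ^ 10 = (I ^ 2) ^ 5 * I ^ 0 by ring, hI2]; norm_num
  have hI11 : (I : ℂ) ^ 11 = -I := by
    rw [show (I : ℂ) ^ 11 = (I ^ 2) ^ 5 * I ^ 1 by ring, hI2]; norm_num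
  have hI12 : (I : ℂ) ^ 12 = 1 := by
    rw [show (I : ℂ) ^ 12 = (I ^ 2) ^ 6 * I ^ 0 by ring, hI2]; norm_num
  have hI13 : (I : ℂ) ^ 13 = I := by
    rw [show (I : ℂ) ^ 13 = (I ^ 2) ^ 6 * I ^ 1 by ring, hI2]; norm_num
  have hI14 : (I : ℂ) ^ 14 = -1 := by
    rw [show (I : ℂ) ^ 14 = (I ^ 2) ^ 7 * I ^ 0 by ring, hI2]; norm_num
  have hI15 : (I : ℂ) ^ 15 = -I := by
    rw [show (I : ℂ) ^ 15 = (I ^ 2) ^ 7 * I ^ 1 by ring, hI2]; norm_num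
  have hI16 : (I : ℂ) ^ 16 = 1 := by
    rw [show (I : ℂ) ^ 16 = (I ^ 2) ^ 8 * I ^ 0 by ring, hI2]; norm_num
  rw [show pT q1 x t = deriv (fun t' => q1 x t') t from rfl, hfunT, hbigT.deriv,
      show pX (pX q1) x t = deriv (fun x' => pX q1 x' t) x from rfl, hfunX, hbigXX.deriv,
      hq1fun x t, hQt]
  have hD := hDne x t
  have hD2 : (starRingEnd ℂ) (φ1 x t) * φ1 x t + (starRingEnd ℂ) (φ2 x t) * φ2 x t ≠ 0 := by
    simpa [mul_comm] using hDne x t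
  simp only [hlam1, map_add, map_sub, map_mul, map_neg, map_div₀, map_ofNat, map_pow,
    Complex.conj_conj, Complex.conj_I, Complex.conj_ofReal, Pi.mul_apply, Pi.add_apply,
    Pi.sub_apply]
  field_simp [hD, hD2]
  ring_nf
  simp only [hI2, hI3, hI4, hI5, hI6, hI7, hI8, hI9, hI10, hI11, hI12, hI13, hI14, hI15, hI16]
  ring
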